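/- arXiv:1910.12321 — 2 statements merged into one kernel-verified Lean document; each statement's English description precedes it below -/
import Mathlib

section
/- Let l be a prime and let ζ be a primitive l-th root of unity in ℂ. If a₁, …, a_m are l-th roots of unity (each a power of ζ) with Σ aᵢ = (m − 1) + ζ, then exactly one aᵢ equals ζ and all the others equal 1. -/
open Polynomial Finset

lemma coeffs_all_eq {l : ℕ} (hl : l.Prime) {ζ : ℂ} (hζ : IsPrimitiveRoot ζ l)
    (d : ℕ → ℤ) (hd : ∑ k ∈ Finset.range l, (d k : ℂ) * ζ ^ k = 0) :
    ∃ t : ℤ, ∀ k < l, d k = t := by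
  classical
  haveI := Fact.mk hl
  set p : ℚ[X] := ∑ k ∈ Finset.range l, monomial k ((d k : ℚ)) with hp
  have hcoeff : ∀ k < l, p.coeff k = (d k : ℚ) := by
    intro k hk
    simp [hp, finset_sum_coeff, coeff_monomial, Finset.sum_ite_eq' (Finset.range l) k,
      Finset.mem_range.mpr hk]
  have haev : aeval ζ p = 0 := by
    rw [hp, map_sum]
    simpa [aeval_monomial] using hd
  have hdvd : cyclotomic l ℚ ∣ p := by
    rw [cyclotomic_eq_minpoly_rat hζ hl.pos]
    exact minpoly.dvd ℚ ζ haev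
  have hΦdeg : (cyclotomic l ℚ).natDegree = l - 1 := by
    rw [natDegree_cyclotomic, Nat.totient_prime hl]
  have hpdeg : p.natDegree ≤ l - 1 := by
    apply natDegree_sum_le_of_forall_le
    intro k hk
    have := Finset.mem_range.mp hk
    exact le_trans (natDegree_monomial_le _) (by omega)
  have hΦcoeff : ∀ k < l, (cyclotomic l ℚ).coeff k = 1 := by
    intro k hk
    rw [cyclotomic_prime ℚ l]
    simp [finset_sum_coeff, coeff_X_pow, Finset.sum_ite_eq' (Finset.range l) k,
      Finset.mem_range.mpr hk]
  by_cases hp0 : p = 0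
  · refine ⟨0, fun k hk => ?_⟩
    have h := hcoeff k hk
    rw [hp0, coeff_zero] at h
    exact_mod_cast h.symm
  · obtain ⟨q, hq⟩ := hdvd
    have hq0 : q ≠ 0 := by rintro rfl; simp at hq; exact hp0 hq
    have hdeg : p.natDegree = (cyclotomic l ℚ).natDegree + q.natDegree :=
      hq ▸ natDegree_mul (cyclotomic_ne_zero l ℚ) hq0
    have hqd : q.natDegree = 0 := by omega
    obtain ⟨a, rfl⟩ := natDegree_eq_zero.mp hqd
    refine ⟨d 0, fun k hk => ?_⟩
    have h1 : (d k : ℚ) = a := by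
      rw [← hcoeff k hk, hq, coeff_mul_C, hΦcoeff k hk, one_mul]
    have h2 : (d 0 : ℚ) = a := by
      rw [← hcoeff 0 hl.pos, hq, coeff_mul_C, hΦcoeff 0 hl.pos, one_mul]
    exact_mod_cast h1.trans h2.symm

/-- If `l` is prime, `ζ` a primitive `l`-th root of unity in `ℂ`, and `a₁, …, a_m` are
powers of `ζ` with `∑ aᵢ = (m − 1) + ζ`, then exactly one `aᵢ` equals `ζ` and all the
others equal `1`. -/
theorem roots_of_unity_sum_eq (l : ℕ) (hl : l.Prime) (ζ : ℂ) (hζ : IsPrimitiveRoot ζ l)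
    (m : ℕ) (a : Fin m → ℂ) (ha : ∀ i, ∃ k : ℕ, a i = ζ ^ k)
    (hsum : ∑ i, a i = ((m : ℂ) - 1) + ζ) :
    ∃! i, a i = ζ ∧ ∀ j, j ≠ i → a j = 1 := by
  classical
  have hl2 : 2 ≤ l := hl.two_le
  have hζ1 : ζ ≠ 1 := hζ.ne_one (by omega)
  choose K hK using ha
  set f : Fin m → ℕ := fun i => K i % l with hfdef
  have hf : ∀ i, a i = ζ ^ (f i) := by
    intro i
    rw [hK i]
    conv_lhs => rw [← Nat.div_add_mod (K i) l]
    rw [pow_add, pow_mul, hζ.pow_eq_one, one_pow, one_mul]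
  have hfl : ∀ i, f i < l := fun i => Nat.mod_lt _ hl.pos
  set c : ℕ → ℕ := fun k => (Finset.univ.filter (fun i => f i = k)).card with hcdef
  have hmaps : ∀ i ∈ (Finset.univ : Finset (Fin m)), f i ∈ Finset.range l :=
    fun i _ => Finset.mem_range.mpr (hfl i)
  have hsum2 : ∑ k ∈ Finset.range l, (c k : ℂ) * ζ ^ k = ((m : ℂ) - 1) + ζ := by
    rw [← hsum, ← Finset.sum_fiberwise_of_maps_to hmaps a]
    refine Finset.sum_congr rfl fun k _ => ?_
    have he : ∑ i ∈ Finset.univ.filter (fun i => f i = k), a i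
        = ∑ _i ∈ Finset.univ.filter (fun i => f i = k), ζ ^ k :=
      Finset.sum_congr rfl fun i hi => by rw [hf i, (Finset.mem_filter.mp hi).2]
    rw [he, Finset.sum_const, nsmul_eq_mul]
  have hm : ∑ k ∈ Finset.range l, c k = m := by
    simpa using (Finset.card_eq_sum_card_fiberwise hmaps).symm
  set d : ℕ → ℤ := fun k =>
    (c k : ℤ) - ((if k = 0 then (m : ℤ) - 1 else 0) + (if k = 1 then 1 else 0)) with hddef
  have hd : ∑ k ∈ Finset.range l, (d k : ℂ) * ζ ^ k = 0 := by
    have e1 : ∑ k ∈ Finset.range l, (if k = 0 then (m : ℂ) - 1 else 0) * ζ ^ k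
        = (m : ℂ) - 1 := by
      rw [Finset.sum_eq_single 0] <;> simp +contextual [Finset.mem_range, hl.pos]
    have e2 : ∑ k ∈ Finset.range l, (if k = 1 then (1 : ℂ) else 0) * ζ ^ k = ζ := by
      rw [Finset.sum_eq_single 1] <;> simp +contextual [Finset.mem_range]
      omega
    have : ∀ k, ((d k : ℂ)) * ζ ^ k = (c k : ℂ) * ζ ^ k
        - ((if k = 0 then (m : ℂ) - 1 else 0) * ζ ^ k + (if k = 1 then (1 : ℂ) else 0) * ζ ^ k) := by
      intro k
      simp only [hddef]
      push_cast
      split_ifs <;> ring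
    simp only [this, Finset.sum_sub_distrib, Finset.sum_add_distrib, e1, e2, hsum2]
    ring
  obtain ⟨t, ht⟩ := coeffs_all_eq hl hζ d hd
  have hsumd : ∑ k ∈ Finset.range l, d k = 0 := by
    have e1 : ∑ k ∈ Finset.range l, (if k = 0 then (m : ℤ) - 1 else 0) = (m : ℤ) - 1 := by
      rw [Finset.sum_eq_single 0] <;> simp +contextual [Finset.mem_range, hl.pos]
    have e2 : ∑ k ∈ Finset.range l, (if k = 1 then (1 : ℤ) else 0) = 1 := by
      rw [Finset.sum_eq_single 1] <;> simp +contextual [Finset.mem_range]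
      omega
    simp only [hddef, Finset.sum_sub_distrib, Finset.sum_add_distrib, e1, e2]
    have : ∑ k ∈ Finset.range l, (c k : ℤ) = (m : ℤ) := by exact_mod_cast congrArg (Nat.cast : ℕ → ℤ) hm
    rw [this]; ring
  have ht0 : t = 0 := by
    have : ∑ k ∈ Finset.range l, d k = l * t := by
      rw [Finset.sum_congr rfl fun k hk => ht k (Finset.mem_range.mp hk)]
      simp [mul_comm]
    rw [this] at hsumd
    have hl0 : (l : ℤ) ≠ 0 := by exact_mod_cast hl.pos.ne'
    exact (mul_eq_zero.mp hsumd).resolve_left hl0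
  have hdz : ∀ k < l, d k = 0 := fun k hk => (ht k hk).trans ht0
  have hc1 : c 1 = 1 := by
    have := hdz 1 (by omega)
    simp [hddef] at this
    omega
  have hck : ∀ k, 2 ≤ k → k < l → c k = 0 := by
    intro k h2 hkl
    have := hdz k hkl
    simp [hddef, (by omega : k ≠ 0), (by omega : k ≠ 1)] at this
    omega
  obtain ⟨i, hi⟩ := Finset.card_eq_one.mp hc1
  have hfi : f i = 1 := by
    have : i ∈ Finset.univ.filter (fun j => f j = 1) := hi ▸ Finset.mem_singleton_self i
    exact (Finset.mem_filter.mp this).2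
  have hai : a i = ζ := by rw [hf i, hfi, pow_one]
  have hothers : ∀ j, j ≠ i → a j = 1 := by
    intro j hj
    have hfj1 : f j ≠ 1 := by
      intro h
      have : j ∈ Finset.univ.filter (fun j => f j = 1) := Finset.mem_filter.mpr ⟨Finset.mem_univ _, h⟩
      rw [hi, Finset.mem_singleton] at this
      exact hj this
    have hfj0 : f j = 0 := by
      by_contra h
      have h2 : 2 ≤ f j := by omega
      have : c (f j) ≠ 0 := by
        have : j ∈ Finset.univ.filter (fun i => f i = f j) :=
          Finset.mem_filter.mpr ⟨Finset.mem_univ _, rfl⟩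
        simp only [hcdef]
        exact Finset.card_ne_zero_of_mem this
      exact this (hck _ h2 (hfl j))
    rw [hf j, hfj0, pow_zero]
  refine ⟨i, ⟨hai, hothers⟩, fun i' hi' => ?_⟩
  by_contra h
  exact hζ1 (hi'.1.symm.trans (hothers i' h))
end

section
/- Pigeonhole/finite-intersection lemma: Let l be a prime and m < l a positive integer. Let Q be a finite set with |Q| ≤ m. Let A, B be abelian groups of exponent l, ψ : A → B a group homomorphism, ev_𝔭 : A → μ_l a group homomorphism, and for each q ∈ Q a group homomorphism ev_q : B → μ_l together with a positive integer f_q. Define φ(χ) = { q ∈ Q : ev_q(ψ(χ)) = ev_𝔭(χ)^{f_q} }. Suppose φ(χ) is nonempty for every χ ∈ A. Then ⋂_{χ ∈ A} φ(χ) is nonempty, provided A is finitely generated. More precisely: for any χ₁, …, χ_n ∈ A, the intersection φ(χ₁) ∩ ⋯ ∩ φ(χ_n) is nonempty. -/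
/-- Pigeonhole / finite-intersection lemma (Lemma 2.7): `l` prime, `m < l`, `Q` a finite
set with `|Q| ≤ m`, `A, B` abelian groups of exponent `l`, `ψ : A → B`, `ev𝔭 : A → μ_l`,
and for each `q ∈ Q` an evaluation `ev_q : B → μ_l` and a positive integer `f_q`. With
`φ(χ) = {q : ev_q(ψ(χ)) = ev𝔭(χ)^{f_q}}`, if `φ(χ) ≠ ∅` for all `χ`, then every finite
intersection `φ(χ₁) ∩ ⋯ ∩ φ(χ_n)` is nonempty, and (provided `A` is finitely generated)
`⋂_{χ ∈ A} φ(χ)` is nonempty. -/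
theorem finite_intersection_of_eval_sets (l m : ℕ) (hl : l.Prime) (hm : 0 < m) (hml : m < l)
    {Q : Type*} [Finite Q] (hQ : Nat.card Q ≤ m)
    {A B : Type*} [CommGroup A] [CommGroup B]
    (hA : ∀ a : A, a ^ l = 1) (hB : ∀ b : B, b ^ l = 1)
    (ψ : A →* B) (evp : A →* ℂˣ) (ev : Q → B →* ℂˣ)
    (hevp : ∀ a : A, evp a ^ l = 1) (hev : ∀ q (b : B), ev q b ^ l = 1)
    (f : Q → ℕ) (hf : ∀ q, 0 < f q)
    (hne : ∀ χ : A, ∃ q : Q, ev q (ψ χ) = evp χ ^ f q) :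
    (∀ (n : ℕ) (χ : Fin n → A), ∃ q : Q, ∀ i, ev q (ψ (χ i)) = evp (χ i) ^ f q) ∧
    (Group.FG A → ∃ q : Q, ∀ χ : A, ev q (ψ χ) = evp χ ^ f q) := by
  classical
  set P : Q → A → Prop := fun q χ => ev q (ψ χ) = evp χ ^ f q with hP
  -- injectivity of d-th power on l-th roots of unity, for 0 < d < l
  have key : ∀ (x y : ℂˣ), x ^ l = 1 → y ^ l = 1 → ∀ d : ℕ, 0 < d → d < l →
      x ^ d = y ^ d → x = y := by
    intro x y hx hy d hd hdl hxy
    have h1 : (x / y) ^ d = 1 := by rw [div_pow, hxy, div_self']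
    have h2 : (x / y) ^ l = 1 := by rw [div_pow, hx, hy, div_one]
    have o1 := orderOf_dvd_of_pow_eq_one h1
    have o2 := orderOf_dvd_of_pow_eq_one h2
    have hcop : Nat.Coprime l d := (Nat.Prime.coprime_iff_not_dvd hl).mpr
      (fun h => absurd (Nat.le_of_dvd hd h) (not_le.mpr hdl))
    have : orderOf (x / y) ∣ Nat.gcd d l := Nat.dvd_gcd o1 o2
    rw [Nat.gcd_comm, hcop] at this
    have : x / y = 1 := orderOf_eq_one_iff.mp (Nat.eq_one_of_dvd_one this)
    exact div_eq_one.mp this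
  -- the key pigeonhole-cancellation step
  have hstep : ∀ (q : Q) (a b : A) (j k : ℕ), j < k → k < l →
      P q (a ^ j * b) → P q (a ^ k * b) → P q a ∧ P q b := by
    intro q a b j k hjk hkl h1 h2
    set x := ev q (ψ a) with hx
    set Y := evp a ^ f q with hY
    set c := ev q (ψ b) with hc
    set d := evp b ^ f q with hd
    have e1 : x ^ j * c = Y ^ j * d := by
      have := h1
      simp only [hP, map_mul, map_pow] at this
      rw [this, mul_pow, ← pow_mul, ← pow_mul, Nat.mul_comm]
    have e2 : x ^ k * c = Y ^ k * d := by
      have := h2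
      simp only [hP, map_mul, map_pow] at this
      rw [this, mul_pow, ← pow_mul, ← pow_mul, Nat.mul_comm]
    have e3 : x ^ (k - j) * (x ^ j * c) = Y ^ (k - j) * (x ^ j * c) := by
      rw [← mul_assoc, ← pow_add, Nat.sub_add_cancel hjk.le, e2]
      conv_rhs => rw [e1, ← mul_assoc, ← pow_add, Nat.sub_add_cancel hjk.le]
    have exy : x ^ (k - j) = Y ^ (k - j) := mul_right_cancel e3
    have hxl : x ^ l = 1 := hev q _
    have hYl : Y ^ l = 1 := by rw [hY, ← pow_mul, Nat.mul_comm, pow_mul, hevp, one_pow]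
    have hPa : x = Y := key x Y hxl hYl (k - j) (Nat.sub_pos_of_lt hjk)
      (lt_of_le_of_lt (Nat.sub_le k j) hkl) exy
    have hPb : c = d := by
      have := e1
      rw [hPa] at this
      exact mul_left_cancel this
    exact ⟨hPa, hPb⟩
  have := Fintype.ofFinite Q
  -- main claim, by strong induction on list length
  have claim : ∀ (n : ℕ) (L : List A), L.length ≤ n → ∃ q : Q, ∀ χ ∈ L, P q χ := by
    intro n
    induction n with
    | zero =>
      intro L hL
      obtain ⟨q, _⟩ := hne 1
      have : L = [] := List.length_eq_zero_iff.mp (Nat.le_zero.mp hL)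
      exact ⟨q, by simp [this]⟩
    | succ n ih =>
      intro L hL
      match L with
      | [] =>
        obtain ⟨q, _⟩ := hne 1
        exact ⟨q, by simp⟩
      | [a] =>
        obtain ⟨q, hq⟩ := hne a
        exact ⟨q, by simpa [hP] using hq⟩
      | a :: b :: L' =>
        have hlen : ∀ j : ℕ, (a ^ j * b :: L').length ≤ n := by
          intro j
          simp only [List.length_cons] at hL ⊢
          omega
        choose qf hqf using fun j : Fin (m + 1) => ih (a ^ (j : ℕ) * b :: L') (hlen _)
        have hcard : Fintype.card Q < Fintype.card (Fin (m + 1)) := by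
          rw [Fintype.card_fin]
          have : Fintype.card Q = Nat.card Q := (Nat.card_eq_fintype_card).symm
          omega
        obtain ⟨j, k, hlt, heq⟩ : ∃ j k : Fin (m + 1), j < k ∧ qf j = qf k := by
          obtain ⟨j, k, hne', heq⟩ := Fintype.exists_ne_map_eq_of_card_lt qf hcard
          rcases lt_or_gt_of_ne hne' with h | h
          · exact ⟨j, k, h, heq⟩
          · exact ⟨k, j, h, heq.symm⟩
        have h1 : P (qf j) (a ^ (j : ℕ) * b) := hqf j _ List.mem_cons_self
        have h2 : P (qf j) (a ^ (k : ℕ) * b) := by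
          rw [heq]
          exact hqf k _ List.mem_cons_self
        have htail : ∀ χ ∈ L', P (qf j) χ := fun χ hχ => hqf j χ (List.mem_cons_of_mem _ hχ)
        have hkl : (k : ℕ) < l := lt_of_le_of_lt (Nat.lt_succ_iff.mp k.isLt) hml
        obtain ⟨hPa, hPb⟩ := hstep (qf j) a b j k (by exact_mod_cast hlt) hkl h1 h2
        refine ⟨qf j, fun χ hχ => ?_⟩
        rcases List.mem_cons.mp hχ with rfl | hχ
        · exact hPa
        rcases List.mem_cons.mp hχ with rfl | hχ
        · exact hPb
        · exact htail χ hχ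
  constructor
  · intro n χ
    obtain ⟨q, hq⟩ := claim n (List.ofFn χ) (by simp)
    exact ⟨q, fun i => hq (χ i) (by simp [List.mem_ofFn])⟩
  · intro hFG
    obtain ⟨S, hS⟩ := hFG.1
    obtain ⟨q, hq⟩ := claim S.toList.length S.toList le_rfl
    -- the set where P q holds is a subgroup
    let K : Subgroup A := {
      carrier := {χ | P q χ}
      one_mem' := by simp [hP]
      mul_mem' := by
        intro x y hx hy
        simp only [hP, Set.mem_setOf_eq, map_mul] at *
        rw [hx, hy, mul_pow]
      inv_mem' := by
        intro x hx
        simp only [hP, Set.mem_setOf_eq, map_inv] at *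
        rw [hx, inv_pow] }
    have hSK : (↑S : Set A) ⊆ ↑K := fun χ hχ => hq χ (by simpa [Finset.mem_toList] using hχ)
    have htop : (⊤ : Subgroup A) ≤ K := by
      rw [← hS]
      exact (Subgroup.closure_le K).mpr hSK
    exact ⟨q, fun χ => htop (Subgroup.mem_top χ)⟩
end
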